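/- The straight-table ménage numbers U(n) = Σ_{k=0}^{n} (-1)^k (2n-k choose k)(n-k)! and round-table ménage numbers A(n) satisfy A(n) = U(n) - U(n-1) for n ≥ 2. -/

import Mathlib

open Finset

/-- The straight-table ménage numbers, via the explicit formula. -/
def straightMenage (n : ℕ) : ℤ :=
  ∑ k ∈ Finset.range (n + 1),
    (-1 : ℤ) ^ k * (2 * n - k).choose k * (n - k).factorial

/-- The round-table ménage numbers: permutations `π` of `ℤ/nℤ` with
`π i ≠ i` and `π i ≠ i + 1` for all `i`. -/
noncomputable def menage (n : ℕ) : ℕ :=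
  Nat.card {π : Equiv.Perm (ZMod n) // ∀ i, π i ≠ i ∧ π i ≠ i + 1}


/-- `Good r s S` : no two distinct indices in `S` share a row or a column. -/
def Good {ι α : Type*} (r s : ι → α) (S : Finset ι) : Prop :=
  ∀ a ∈ S, ∀ b ∈ S, (r a = r b ∨ s a = s b) → a = b

instance {ι α : Type*} [DecidableEq ι] [DecidableEq α] (r s : ι → α) :
    DecidablePred (Good r s) := fun _ => by unfold Good; infer_instance

section extend

variable {α ι : Type*} [Fintype α] [DecidableEq α]

/-- Number of permutations extending a partial injection. -/
lemma card_perm_extend (S : Finset ι) (r s : ι → α) (hgood : Good r s S) :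
    Fintype.card {π : Equiv.Perm α // ∀ i ∈ S, π (r i) = s i}
      = (Fintype.card α - S.card).factorial := by
  classical
  have hr : Set.InjOn r ↑S := fun a ha b hb h => hgood a ha b hb (Or.inl h)
  have hs : Set.InjOn s ↑S := fun a ha b hb h => hgood a ha b hb (Or.inr h)
  let e₀ : (r '' (S : Set ι)) ≃ (s '' (S : Set ι)) :=
    (Equiv.Set.imageOfInjOn r S hr).symm.trans (Equiv.Set.imageOfInjOn s S hs)
  have he₀ : ∀ (i : ι) (hi : i ∈ S) (h : (r i) ∈ r '' (S : Set ι)),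
      (e₀ ⟨r i, h⟩ : α) = s i := by
    intro i hi h
    have h1 : (Equiv.Set.imageOfInjOn r S hr).symm ⟨r i, h⟩ = ⟨i, hi⟩ := by
      rw [Equiv.symm_apply_eq]
      rfl
    show ((Equiv.Set.imageOfInjOn s (S : Set ι) hs)
        ((Equiv.Set.imageOfInjOn r (S : Set ι) hr).symm ⟨r i, h⟩) : α) = s i
    rw [h1]
    rfl
  have key : {π : Equiv.Perm α // ∀ i ∈ S, π (r i) = s i}
      ≃ (((r '' (S : Set ι))ᶜ : Set α) ≃ ((s '' (S : Set ι))ᶜ : Set α)) := by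
    refine (Equiv.subtypeEquivRight ?_).trans (Equiv.Set.compl e₀)
    intro π
    constructor
    · rintro h ⟨x, hx⟩
      obtain ⟨i, hi, rfl⟩ := hx
      show π (r i) = _
      exact (h i hi).trans (he₀ i hi _).symm
    · intro h i hi
      have := h ⟨r i, ⟨i, hi, rfl⟩⟩
      exact this.trans (he₀ i hi _)
  rw [Fintype.card_congr key]
  have hcr : Fintype.card (r '' (S : Set ι)) = S.card := by
    rw [Fintype.card_congr (Equiv.Set.imageOfInjOn r S hr).symm]
    simp
  have hcs : Fintype.card (s '' (S : Set ι)) = S.card := by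
    rw [Fintype.card_congr (Equiv.Set.imageOfInjOn s S hs).symm]
    simp
  have h1 : Fintype.card ((r '' (S : Set ι))ᶜ : Set α) = Fintype.card α - S.card := by
    rw [Fintype.card_compl_set, hcr]
  have h2 : Fintype.card ((s '' (S : Set ι))ᶜ : Set α) = Fintype.card α - S.card := by
    rw [Fintype.card_compl_set, hcs]
  rw [Fintype.card_equiv (Fintype.equivOfCardEq (h1.trans h2.symm)), h1]

lemma card_perm_extend_zero (S : Finset ι) (r s : ι → α)
    (hinj : Set.InjOn (fun t => (r t, s t)) ↑S) (hbad : ¬ Good r s S) :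
    Fintype.card {π : Equiv.Perm α // ∀ i ∈ S, π (r i) = s i} = 0 := by
  classical
  rw [Fintype.card_eq_zero_iff]
  constructor
  rintro ⟨π, hπ⟩
  unfold Good at hbad
  push_neg at hbad
  obtain ⟨a, ha, b, hb, hab, hne⟩ := hbad
  rcases hab with h | h
  · have hsa : s a = s b := by
      have h1 := hπ a ha
      have h2 := hπ b hb
      rw [← h1, ← h2, h]
    exact hne (hinj ha hb (by simp [h, hsa]))
  · have hra : r a = r b := π.injective (by rw [hπ a ha, hπ b hb, h])
    exact hne (hinj ha hb (by simp [h, hra]))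

/-- Inclusion–exclusion for permutations avoiding a board. -/
lemma card_avoid {ι : Type*} [DecidableEq ι] (r s : ι → α) (I : Finset ι)
    (hinj : Set.InjOn (fun t => (r t, s t)) ↑I) :
    (Fintype.card {π : Equiv.Perm α // ∀ t ∈ I, π (r t) ≠ s t} : ℤ)
      = ∑ S ∈ I.powerset, (-1 : ℤ) ^ S.card *
          (if Good r s S then ((Fintype.card α - S.card).factorial : ℤ) else 0) := by
  classical
  have step1 : (Fintype.card {π : Equiv.Perm α // ∀ t ∈ I, π (r t) ≠ s t} : ℤ)
      = ∑ π : Equiv.Perm α, if (∀ t ∈ I, π (r t) ≠ s t) then 1 else 0 := by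
    rw [Fintype.card_subtype, Finset.card_filter]
    push_cast
    rfl
  have expand : ∀ (π : Equiv.Perm α) (T : Finset ι),
      (∏ t ∈ T, (if π (r t) = s t then (-1 : ℤ) else 0))
        = if (∀ t ∈ T, π (r t) = s t) then (-1) ^ T.card else 0 := by
    intro π T
    induction T using Finset.induction with
    | empty => simp
    | @insert a T ha ih =>
      rw [Finset.prod_insert ha, ih]
      by_cases h1 : π (r a) = s a <;> by_cases h2 : ∀ t ∈ T, π (r t) = s t <;>
        simp [h1, h2, Finset.forall_mem_insert, Finset.card_insert_of_notMem ha, pow_succ] <;>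
        ring
  have step2 : ∀ π : Equiv.Perm α, (if (∀ t ∈ I, π (r t) ≠ s t) then (1 : ℤ) else 0)
      = ∑ S ∈ I.powerset, (-1) ^ S.card * (if (∀ t ∈ S, π (r t) = s t) then 1 else 0) := by
    intro π
    have lhs_eq : (if (∀ t ∈ I, π (r t) ≠ s t) then (1 : ℤ) else 0)
        = ∏ t ∈ I, ((if π (r t) = s t then (-1 : ℤ) else 0) + 1) := by
      split
      · rw [Finset.prod_eq_one]
        intro t ht
        rw [if_neg (by tauto)]
        ring
      · rename_i hne
        push_neg at hne
        obtain ⟨t, ht, h⟩ := hne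
        rw [eq_comm]
        apply Finset.prod_eq_zero ht
        rw [if_pos h]
        ring
    rw [lhs_eq, Finset.prod_add]
    refine Finset.sum_congr rfl fun S hS => ?_
    rw [Finset.prod_const_one, mul_one, expand π S]
    split <;> ring
  rw [step1]
  rw [Finset.sum_congr rfl fun π _ => step2 π, Finset.sum_comm]
  refine Finset.sum_congr rfl fun S hS => ?_
  rw [← Finset.mul_sum]
  congr 1
  have hsub : (S : Set ι) ⊆ ↑I := by
    exact_mod_cast Finset.mem_powerset.1 hS
  have : (∑ π : Equiv.Perm α, if (∀ t ∈ S, π (r t) = s t) then (1 : ℤ) else 0)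
      = (Fintype.card {π : Equiv.Perm α // ∀ t ∈ S, π (r t) = s t} : ℤ) := by
    rw [Fintype.card_subtype, Finset.card_filter]
    push_cast
    rfl
  rw [this]
  by_cases hg : Good r s S
  · rw [if_pos hg, card_perm_extend S r s hg]
  · rw [if_neg hg, card_perm_extend_zero S r s (hinj.mono hsub) hg, Nat.cast_zero]

end extend


/-- No two consecutive naturals. -/
def Sparse (T : Finset ℕ) : Prop := ∀ j ∈ T, j + 1 ∉ T

instance : DecidablePred Sparse := fun _ => by unfold Sparse; infer_instance

/-- Number of sparse `k`-subsets of `{0, …, m-1}` (independent sets in a path). -/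
def pCount (m k : ℕ) : ℕ := ((Finset.powersetCard k (Finset.range m)).filter Sparse).card

/-- Cyclically sparse: sparse and not containing both endpoints `0` and `m-1`. -/
def CSparse (m : ℕ) (T : Finset ℕ) : Prop := Sparse T ∧ ¬(0 ∈ T ∧ m - 1 ∈ T)

instance (m : ℕ) : DecidablePred (CSparse m) := fun _ => by unfold CSparse; infer_instance

/-- Number of cyclically sparse `k`-subsets of `{0, …, m-1}` (independent sets in a cycle). -/
def cCount (m k : ℕ) : ℕ := ((Finset.powersetCard k (Finset.range m)).filter (CSparse m)).card

lemma pCount_zero (m : ℕ) : pCount m 0 = 1 := by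
  simp [pCount, Finset.powersetCard_zero, Finset.filter_singleton,
    show Sparse ∅ from fun j hj => by simp at hj]

lemma cCount_zero (m : ℕ) : cCount m 0 = 1 := by
  have : CSparse m ∅ := ⟨fun j hj => by simp at hj, by simp⟩
  simp [cCount, Finset.powersetCard_zero, Finset.filter_singleton, this]

lemma sparse_subset {T T' : Finset ℕ} (h : T' ⊆ T) (hT : Sparse T) : Sparse T' :=
  fun j hj hj1 => hT j (h hj) (h hj1)

lemma pCount_small {m k : ℕ} (h : m < k) : pCount m k = 0 := by
  rw [pCount, Finset.card_eq_zero, Finset.filter_eq_empty_iff]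
  intro T hT
  rw [Finset.mem_powersetCard] at hT
  have := Finset.card_le_card hT.1
  rw [hT.2, Finset.card_range] at this
  omega

lemma pCount_one : pCount 1 1 = 1 := by decide

lemma pCount_succ_succ (m k : ℕ) : pCount (m + 2) (k + 1) = pCount (m + 1) (k + 1) + pCount m k := by
  classical
  rw [pCount, ← Finset.card_filter_add_card_filter_not (p := fun T => (m + 1) ∈ T)]
  have hpart2 : (((Finset.powersetCard (k+1) (Finset.range (m+2))).filter Sparse).filter
        (fun T => (m+1) ∈ T)).card = pCount m k := by
    apply Finset.card_nbij' (fun T => T.erase (m+1)) (fun T => insert (m+1) T)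
    · intro T hT
      simp only [Finset.mem_coe, Finset.mem_filter, Finset.mem_powersetCard] at hT ⊢
      obtain ⟨⟨⟨hsub, hcard⟩, hsp⟩, hmem⟩ := hT
      have hm : m ∉ T := fun hm => hsp m hm hmem
      refine ⟨⟨?_, ?_⟩, sparse_subset (Finset.erase_subset _ _) hsp⟩
      · intro x hx
        rw [Finset.mem_erase] at hx
        have := hsub hx.2
        rw [Finset.mem_range] at this ⊢
        have : x ≠ m := fun h => hm (h ▸ hx.2)
        omega
      · rw [Finset.card_erase_of_mem hmem, hcard]
        omega
    · intro T hT
      simp only [Finset.mem_coe, Finset.mem_filter, Finset.mem_powersetCard] at hT ⊢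
      obtain ⟨⟨hsub, hcard⟩, hsp⟩ := hT
      have hnm : (m+1) ∉ T := fun h => by have := hsub h; rw [Finset.mem_range] at this; omega
      refine ⟨⟨⟨?_, ?_⟩, ?_⟩, Finset.mem_insert_self _ _⟩
      · intro x hx
        rw [Finset.mem_insert] at hx
        rw [Finset.mem_range]
        rcases hx with rfl | hx
        · omega
        · have := hsub hx; rw [Finset.mem_range] at this; omega
      · rw [Finset.card_insert_of_notMem hnm, hcard]
      · intro j hj hj1
        rw [Finset.mem_insert] at hj hj1
        rcases hj with rfl | hj
        · rcases hj1 with h | h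
          · omega
          · have := hsub h; rw [Finset.mem_range] at this; omega
        · rcases hj1 with h | h
          · have := hsub hj; rw [Finset.mem_range] at this; omega
          · exact hsp j hj h
    · intro T hT
      simp only [Finset.mem_coe, Finset.mem_filter] at hT
      exact Finset.insert_erase hT.2
    · intro T hT
      simp only [Finset.mem_coe, Finset.mem_filter, Finset.mem_powersetCard] at hT
      apply Finset.erase_insert
      intro h
      have := hT.1.1 h
      rw [Finset.mem_range] at this
      omega
  have hpart1 : (((Finset.powersetCard (k+1) (Finset.range (m+2))).filter Sparse).filter
        (fun T => ¬ (m+1) ∈ T)).card = pCount (m + 1) (k + 1) := by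
    congr 1
    ext T
    simp only [Finset.mem_filter, Finset.mem_powersetCard, pCount]
    constructor
    · rintro ⟨⟨⟨hsub, hcard⟩, hsp⟩, hmem⟩
      refine ⟨⟨?_, hcard⟩, hsp⟩
      intro x hx
      have := hsub hx
      rw [Finset.mem_range] at this ⊢
      have : x ≠ m + 1 := fun h => hmem (h ▸ hx)
      omega
    · rintro ⟨⟨hsub, hcard⟩, hsp⟩
      have hnm : (m+1) ∉ T := fun h => by have := hsub h; rw [Finset.mem_range] at this; omega
      exact ⟨⟨⟨fun x hx => by
        have := hsub hx; rw [Finset.mem_range] at this ⊢; omega, hcard⟩, hsp⟩, hnm⟩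
  rw [hpart2, hpart1, Nat.add_comm]

lemma pCount_eq : ∀ m k, pCount m k = (m + 1 - k).choose k
  | m, 0 => by simp [pCount_zero]
  | 0, (k+1) => by rw [pCount_small (by omega)]; simp
  | 1, (k+1) => by
      rcases Nat.eq_zero_or_pos k with rfl | hk
      · rw [pCount_one]; rfl
      · rw [pCount_small (by omega)]
        rw [eq_comm, Nat.choose_eq_zero_iff]
        omega
  | (m+2), (k+1) => by
      rw [pCount_succ_succ, pCount_eq (m+1) (k+1), pCount_eq m k]
      rcases le_or_gt k (m+1) with h | h
      · have h1 : m + 2 + 1 - (k+1) = (m + 1 - k) + 1 := by omega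
        have h2 : m + 1 + 1 - (k + 1) = m + 1 - k := by omega
        rw [h1, h2, Nat.choose_succ_succ']
        omega
      · have h1 : m + 1 + 1 - (k + 1) = 0 := by omega
        have h2 : m + 1 - k = 0 := by omega
        have h3 : m + 2 + 1 - (k + 1) = m + 2 - k := by omega
        rw [h1, h2, h3, Nat.choose_eq_zero_of_lt (by omega), Nat.choose_eq_zero_of_lt (by omega),
          Nat.choose_eq_zero_of_lt (by omega)]

/-- Shifted path count: sparse `k`-subsets of `{1, …, m}`. -/
lemma pCount_shift (m k : ℕ) :
    (((Finset.powersetCard k (Finset.Ico 1 (m + 1))).filter Sparse)).card = pCount m k := by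
  classical
  apply Finset.card_nbij' (fun T => T.image (· - 1)) (fun T => T.image (· + 1))
  · intro T hT
    simp only [Finset.mem_coe, Finset.mem_filter, Finset.mem_powersetCard] at hT ⊢
    obtain ⟨⟨hsub, hcard⟩, hsp⟩ := hT
    have hone : ∀ x ∈ T, 1 ≤ x ∧ x < m + 1 := by
      intro x hx; have := hsub hx; rw [Finset.mem_Ico] at this; omega
    refine ⟨⟨?_, ?_⟩, ?_⟩
    · intro x hx
      rw [Finset.mem_image] at hx
      obtain ⟨a, ha, rfl⟩ := hx
      rw [Finset.mem_range]
      have := hone a ha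
      omega
    · rw [Finset.card_image_of_injOn, hcard]
      intro a ha b hb hab
      have h1 := hone a ha
      have h2 := hone b hb
      simp only at hab
      omega
    · intro j hj hj1
      rw [Finset.mem_image] at hj hj1
      obtain ⟨a, ha, rfl⟩ := hj
      obtain ⟨b, hb, hab⟩ := hj1
      have h1 := hone a ha
      have h2 := hone b hb
      have : b = a + 1 := by omega
      exact hsp a ha (this ▸ hb)
  · intro T hT
    simp only [Finset.mem_coe, Finset.mem_filter, Finset.mem_powersetCard] at hT ⊢
    obtain ⟨⟨hsub, hcard⟩, hsp⟩ := hT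
    have hlt : ∀ x ∈ T, x < m := by
      intro x hx; have := hsub hx; rwa [Finset.mem_range] at this
    refine ⟨⟨?_, ?_⟩, ?_⟩
    · intro x hx
      rw [Finset.mem_image] at hx
      obtain ⟨a, ha, rfl⟩ := hx
      rw [Finset.mem_Ico]
      have := hlt a ha
      omega
    · rw [Finset.card_image_of_injOn, hcard]
      intro a _ b _ hab
      simpa using hab
    · intro j hj hj1
      rw [Finset.mem_image] at hj hj1
      obtain ⟨a, ha, rfl⟩ := hj
      obtain ⟨b, hb, hab⟩ := hj1
      have : b = a + 1 := by omega
      exact hsp a ha (this ▸ hb)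
  · intro T hT
    simp only [Finset.mem_coe, Finset.mem_filter, Finset.mem_powersetCard] at hT
    beta_reduce
    rw [Finset.image_image]
    have : T.image ((fun x => x + 1) ∘ (fun x => x - 1)) = T.image id := by
      apply Finset.image_congr
      intro x hx
      simp only [Function.comp_apply, id_eq]
      have := hT.1.1 (by simpa using hx)
      rw [Finset.mem_Ico] at this
      omega
    rw [this, Finset.image_id]
  · intro T _
    beta_reduce
    rw [Finset.image_image]
    have : T.image ((fun x => x - 1) ∘ (fun x => x + 1)) = T.image id := by
      apply Finset.image_congr
      intro x hx
      simp
    rw [this, Finset.image_id]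

lemma cCount_succ (m k : ℕ) (hm : 3 ≤ m) :
    cCount m (k + 1) = pCount (m - 1) (k + 1) + pCount (m - 3) k := by
  classical
  rw [cCount, ← Finset.card_filter_add_card_filter_not (p := fun T => (m - 1) ∈ T)]
  have hpart2 : (((Finset.powersetCard (k+1) (Finset.range m)).filter (CSparse m)).filter
        (fun T => (m - 1) ∈ T)).card = pCount (m - 3) k := by
    rw [← pCount_shift]
    apply Finset.card_nbij' (fun T => T.erase (m - 1)) (fun T => insert (m - 1) T)
    · intro T hT
      simp only [Finset.mem_coe, Finset.mem_filter, Finset.mem_powersetCard] at hT ⊢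
      obtain ⟨⟨⟨hsub, hcard⟩, hsp, hcyc⟩, hmem⟩ := hT
      have h0 : 0 ∉ T := fun h0 => hcyc ⟨h0, hmem⟩
      have hm2 : m - 2 ∉ T := fun h => hsp (m - 2) h (by rwa [show m - 2 + 1 = m - 1 by omega])
      refine ⟨⟨?_, ?_⟩, sparse_subset (Finset.erase_subset _ _) hsp⟩
      · intro x hx
        rw [Finset.mem_erase] at hx
        obtain ⟨hne, hxT⟩ := hx
        have := hsub hxT
        rw [Finset.mem_range] at this
        rw [Finset.mem_Ico]
        have hx0 : x ≠ 0 := fun h => h0 (h ▸ hxT)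
        have hxm2 : x ≠ m - 2 := fun h => hm2 (h ▸ hxT)
        constructor <;> omega
      · rw [Finset.card_erase_of_mem hmem, hcard]
        omega
    · intro T hT
      simp only [Finset.mem_coe, Finset.mem_filter, Finset.mem_powersetCard] at hT ⊢
      obtain ⟨⟨hsub, hcard⟩, hsp⟩ := hT
      have hbound : ∀ x ∈ T, 1 ≤ x ∧ x < m - 2 := by
        intro x hx; have := hsub hx; rw [Finset.mem_Ico] at this; omega
      have hnm : (m - 1) ∉ T := fun h => by have := hbound _ h; omega
      refine ⟨⟨⟨?_, ?_⟩, ?_, ?_⟩, Finset.mem_insert_self _ _⟩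
      · intro x hx
        rw [Finset.mem_insert] at hx
        rw [Finset.mem_range]
        rcases hx with rfl | hx
        · omega
        · have := hbound x hx; omega
      · rw [Finset.card_insert_of_notMem hnm, hcard]
      · intro j hj hj1
        rw [Finset.mem_insert] at hj hj1
        rcases hj with rfl | hj
        · rcases hj1 with h | h
          · omega
          · have := hbound _ h; omega
        · rcases hj1 with h | h
          · have := hbound _ hj; omega
          · exact hsp j hj h
      · rintro ⟨h0, -⟩
        rw [Finset.mem_insert] at h0
        rcases h0 with h | h
        · omega
        · have := hbound _ h; omega
    · intro T hT
      simp only [Finset.mem_coe, Finset.mem_filter] at hT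
      exact Finset.insert_erase hT.2
    · intro T hT
      simp only [Finset.mem_coe, Finset.mem_filter, Finset.mem_powersetCard] at hT
      apply Finset.erase_insert
      intro h
      have := hT.1.1 h
      rw [Finset.mem_Ico] at this
      omega
  have hpart1 : (((Finset.powersetCard (k+1) (Finset.range m)).filter (CSparse m)).filter
        (fun T => ¬ (m - 1) ∈ T)).card = pCount (m - 1) (k + 1) := by
    rw [pCount]
    congr 1
    ext T
    simp only [Finset.mem_filter, Finset.mem_powersetCard]
    constructor
    · rintro ⟨⟨⟨hsub, hcard⟩, hsp, -⟩, hmem⟩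
      refine ⟨⟨?_, hcard⟩, hsp⟩
      intro x hx
      have := hsub hx
      rw [Finset.mem_range] at this ⊢
      have : x ≠ m - 1 := fun h => hmem (h ▸ hx)
      omega
    · rintro ⟨⟨hsub, hcard⟩, hsp⟩
      have hnm : (m - 1) ∉ T := fun h => by
        have := hsub h; rw [Finset.mem_range] at this; omega
      refine ⟨⟨⟨fun x hx => by
        have := hsub hx; rw [Finset.mem_range] at this ⊢; omega, hcard⟩, hsp, ?_⟩, hnm⟩
      rintro ⟨-, h⟩
      exact hnm h
  rw [hpart2, hpart1, Nat.add_comm]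

lemma cCount_formula (m k : ℕ) (hm : 3 ≤ m) :
    cCount m (k + 1) = (m - (k + 1)).choose (k + 1) + (m - 2 - k).choose k := by
  rw [cCount_succ m k hm, pCount_eq, pCount_eq,
    show m - 1 + 1 - (k + 1) = m - (k + 1) by omega,
    show m - 3 + 1 - k = m - 2 - k by omega]


/-- Row of the `j`-th cell of the circular ménage board. -/
def rr (n : ℕ) (j : ℕ) : ZMod n := ((j / 2 : ℕ) : ZMod n)

/-- Column of the `j`-th cell of the circular ménage board. -/
def ss (n : ℕ) (j : ℕ) : ZMod n := if j % 2 = 1 then rr n j + 1 else rr n j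


lemma cast_inj_of_lt {n x y : ℕ} (hx : x < n) (hy : y < n) (h : (x : ZMod n) = y) : x = y := by
  have := congrArg ZMod.val h
  rwa [ZMod.val_cast_of_lt hx, ZMod.val_cast_of_lt hy] at this

lemma good_iff {n : ℕ} (hn : 2 ≤ n) {S : Finset ℕ} (hS : S ⊆ Finset.range (2 * n)) :
    Good (rr n) (ss n) S ↔ CSparse (2 * n) S := by
  have hlt : ∀ a ∈ S, a < 2 * n := fun a ha => Finset.mem_range.1 (hS ha)
  constructor
  · intro hg
    constructor
    · intro j hj hj1
      have h1 : j < 2 * n := hlt _ hj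
      have h2 : j + 1 < 2 * n := hlt _ hj1
      by_cases hp : j % 2 = 1
      · have hss : ss n j = ss n (j + 1) := by
          unfold ss rr
          rw [if_pos hp, if_neg (by omega)]
          rw [show (j + 1) / 2 = j / 2 + 1 from by omega]
          push_cast
          ring
        have := hg j hj (j + 1) hj1 (Or.inr hss)
        omega
      · have hrr : rr n j = rr n (j + 1) := by
          unfold rr
          rw [show (j + 1) / 2 = j / 2 from by omega]
        have := hg j hj (j + 1) hj1 (Or.inl hrr)
        omega
    · rintro ⟨h0, hm⟩
      have hss : ss n 0 = ss n (2 * n - 1) := by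
        unfold ss rr
        rw [if_neg (by omega), if_pos (by omega)]
        rw [show (0 : ℕ) / 2 = 0 from by omega, show (2 * n - 1) / 2 = n - 1 from by omega]
        rw [show ((n - 1 : ℕ) : ZMod n) + 1 = ((n - 1 + 1 : ℕ) : ZMod n) from by push_cast; ring]
        rw [Nat.sub_add_cancel (by omega), ZMod.natCast_self]
        simp
      have := hg 0 h0 (2 * n - 1) hm (Or.inr hss)
      omega
  · rintro ⟨hsp, hcyc⟩
    have key : ∀ a ∈ S, ∀ b ∈ S, a < b → (rr n a = rr n b ∨ ss n a = ss n b) → False := by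
      intro a ha b hb hab h
      have hA : a < 2 * n := hlt _ ha
      have hB : b < 2 * n := hlt _ hb
      rcases h with h | h
      · unfold rr at h
        have hd : a / 2 = b / 2 := cast_inj_of_lt (by omega) (by omega) h
        have hb' : b = a + 1 := by omega
        exact hsp a ha (hb' ▸ hb)
      · unfold ss rr at h
        by_cases pa : a % 2 = 1 <;> by_cases pb : b % 2 = 1
        · rw [if_pos pa, if_pos pb] at h
          have h' : ((a / 2 : ℕ) : ZMod n) = ((b / 2 : ℕ) : ZMod n) := add_right_cancel h
          have := cast_inj_of_lt (n := n) (by omega) (by omega) h'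
          omega
        · rw [if_pos pa, if_neg pb] at h
          have h' : ((a / 2 + 1 : ℕ) : ZMod n) = ((b / 2 : ℕ) : ZMod n) := by
            push_cast
            exact h
          rcases Nat.lt_or_ge (a / 2 + 1) n with hc | hc
          · have := cast_inj_of_lt hc (by omega) h'
            have hb' : b = a + 1 := by omega
            exact hsp a ha (hb' ▸ hb)
          · omega
        · rw [if_neg pa, if_pos pb] at h
          have h' : ((a / 2 : ℕ) : ZMod n) = ((b / 2 + 1 : ℕ) : ZMod n) := by
            push_cast
            exact h
          rcases Nat.lt_or_ge (b / 2 + 1) n with hc | hc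
          · have := cast_inj_of_lt (by omega) hc h'
            omega
          · have hb2 : b / 2 + 1 = n := by omega
            have h'' : ((a / 2 : ℕ) : ZMod n) = ((0 : ℕ) : ZMod n) := by
              rw [h', hb2, ZMod.natCast_self, Nat.cast_zero]
            have := cast_inj_of_lt (n := n) (by omega) (by omega) h''
            have ha0 : a = 0 := by omega
            have hbv : b = 2 * n - 1 := by omega
            exact hcyc ⟨ha0 ▸ ha, hbv ▸ hb⟩
        · rw [if_neg pa, if_neg pb] at h
          have := cast_inj_of_lt (n := n) (by omega) (by omega) h
          omega
    intro a ha b hb h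
    rcases lt_trichotomy a b with hc | hc | hc
    · exact absurd h (by intro hh; exact key a ha b hb hc hh)
    · exact hc
    · exact absurd (h.imp Eq.symm Eq.symm) (by intro hh; exact key b hb a ha hc hh)

lemma hinj_rr_ss {n : ℕ} (hn : 2 ≤ n) :
    Set.InjOn (fun t => (rr n t, ss n t)) ↑(Finset.range (2 * n)) := by
  intro a ha b hb h
  simp only [Finset.coe_range, Set.mem_Iio] at ha hb
  rw [Prod.mk.injEq] at h
  obtain ⟨h1, h2⟩ := h
  unfold rr at h1
  have hd : a / 2 = b / 2 := cast_inj_of_lt (by omega) (by omega) h1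
  have hone : ¬ ((1 : ZMod n) = 0) := by
    intro h0
    have : ((1 : ℕ) : ZMod n) = ((0 : ℕ) : ZMod n) := by push_cast; exact h0
    have := cast_inj_of_lt (by omega) (by omega) this
    omega
  by_cases pa : a % 2 = 1 <;> by_cases pb : b % 2 = 1
  · omega
  · exfalso
    unfold ss rr at h2
    rw [if_pos pa, if_neg pb] at h2
    rw [hd] at h2
    exact hone (add_eq_left.mp h2)
  · exfalso
    unfold ss rr at h2
    rw [if_neg pa, if_pos pb] at h2
    rw [hd] at h2
    exact hone (left_eq_add.mp h2)
  · omega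

theorem menage_eq_straight_sub (n : ℕ) (hn : 2 ≤ n) :
    (menage n : ℤ) = straightMenage n - straightMenage (n - 1) := by
  haveI : NeZero n := ⟨by omega⟩
  classical
  have cond_iff : ∀ π : Equiv.Perm (ZMod n),
      (∀ i, π i ≠ i ∧ π i ≠ i + 1) ↔ (∀ j ∈ Finset.range (2 * n), π (rr n j) ≠ ss n j) := by
    intro π
    constructor
    · intro h j _
      unfold ss
      split
      · exact (h (rr n j)).2
      · exact (h (rr n j)).1
    · intro h i
      have hv : i.val < n := ZMod.val_lt i
      have hcast : ((i.val : ℕ) : ZMod n) = i := ZMod.natCast_rightInverse i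
      constructor
      · have := h (2 * i.val) (by rw [Finset.mem_range]; omega)
        unfold ss rr at this
        rw [if_neg (by omega), show 2 * i.val / 2 = i.val from by omega, hcast] at this
        exact this
      · have := h (2 * i.val + 1) (by rw [Finset.mem_range]; omega)
        unfold ss rr at this
        rw [if_pos (by omega), show (2 * i.val + 1) / 2 = i.val from by omega, hcast] at this
        exact this
  rw [menage, Nat.card_eq_fintype_card,
    Fintype.card_congr (Equiv.subtypeEquivRight cond_iff)]
  rw [card_avoid (rr n) (ss n) _ (hinj_rr_ss hn)]
  rw [Finset.powerset_card_disjiUnion]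
  refine Eq.trans (Finset.sum_disjiUnion _ _ _) ?_
  rw [Finset.card_range]
  have hcardZ : Fintype.card (ZMod n) = n := ZMod.card n
  have inner : ∀ k ∈ Finset.range (2 * n + 1),
      (∑ S ∈ Finset.powersetCard k (Finset.range (2 * n)), (-1 : ℤ) ^ S.card *
        (if Good (rr n) (ss n) S then ((Fintype.card (ZMod n) - S.card).factorial : ℤ) else 0))
      = (-1 : ℤ) ^ k * ((n - k).factorial : ℤ) * (cCount (2 * n) k : ℤ) := by
    intro k _
    have hterm : ∀ S ∈ Finset.powersetCard k (Finset.range (2 * n)),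
        (-1 : ℤ) ^ S.card *
          (if Good (rr n) (ss n) S then ((Fintype.card (ZMod n) - S.card).factorial : ℤ) else 0)
        = if CSparse (2 * n) S then (-1 : ℤ) ^ k * ((n - k).factorial : ℤ) else 0 := by
      intro S hS
      rw [Finset.mem_powersetCard] at hS
      obtain ⟨hsub, hcard⟩ := hS
      by_cases hcs : CSparse (2 * n) S
      · rw [if_pos hcs, if_pos ((good_iff hn hsub).2 hcs), hcard, hcardZ]
      · rw [if_neg hcs, if_neg (fun hg => hcs ((good_iff hn hsub).1 hg)), mul_zero]
    rw [Finset.sum_congr rfl hterm, Finset.sum_ite, Finset.sum_const_zero, add_zero,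
      Finset.sum_const, nsmul_eq_mul, cCount]
    ring
  rw [Finset.sum_congr rfl inner]
  set g : ℕ → ℤ := fun k => if k = 0 then 0 else ((2 * n - 1 - k).choose (k - 1) : ℤ) with hg
  have hcc : ∀ k ∈ Finset.range (2 * n + 1),
      (-1 : ℤ) ^ k * ((n - k).factorial : ℤ) * (cCount (2 * n) k : ℤ)
      = (-1 : ℤ) ^ k * ((2 * n - k).choose k : ℤ) * ((n - k).factorial : ℤ)
        + (-1 : ℤ) ^ k * ((n - k).factorial : ℤ) * g k := by
    intro k _
    cases k with
    | zero => simp [cCount_zero, hg]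
    | succ k =>
      rw [cCount_formula _ _ (by omega)]
      have hgk : g (k + 1) = ((2 * n - 2 - k).choose k : ℤ) := by
        simp only [hg, if_neg (Nat.succ_ne_zero k)]
        rw [show 2 * n - 1 - (k + 1) = 2 * n - 2 - k from by omega, Nat.add_sub_cancel]
      rw [hgk]
      push_cast
      ring
  rw [Finset.sum_congr rfl hcc, Finset.sum_add_distrib]
  have sumA : (∑ k ∈ Finset.range (2 * n + 1),
      (-1 : ℤ) ^ k * ((2 * n - k).choose k : ℤ) * ((n - k).factorial : ℤ))
      = straightMenage n := by
    rw [straightMenage]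
    refine (Finset.sum_subset (Finset.range_subset_range.2 (by omega : n + 1 ≤ 2 * n + 1)) ?_).symm
    intro x hx hnx
    rw [Finset.mem_range] at hx
    rw [Finset.mem_range, not_lt] at hnx
    rw [Nat.choose_eq_zero_of_lt (by omega)]
    simp
  have sumB : (∑ k ∈ Finset.range (2 * n + 1),
      (-1 : ℤ) ^ k * ((n - k).factorial : ℤ) * g k) = - straightMenage (n - 1) := by
    rw [Finset.sum_range_succ']
    have h0 : (-1 : ℤ) ^ 0 * ((n - 0).factorial : ℤ) * g 0 = 0 := by simp [hg]
    rw [h0, add_zero]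
    have hterm : ∀ i ∈ Finset.range (2 * n),
        (-1 : ℤ) ^ (i + 1) * ((n - (i + 1)).factorial : ℤ) * g (i + 1)
        = -((-1 : ℤ) ^ i * ((2 * (n - 1) - i).choose i : ℤ) * ((n - 1 - i).factorial : ℤ)) := by
      intro i _
      have h1 : g (i + 1) = ((2 * (n - 1) - i).choose i : ℤ) := by
        simp only [hg, if_neg (Nat.succ_ne_zero i)]
        rw [show 2 * n - 1 - (i + 1) = 2 * (n - 1) - i from by omega, Nat.add_sub_cancel]
      rw [h1, show n - (i + 1) = n - 1 - i from by omega, pow_succ]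
      ring
    rw [Finset.sum_congr rfl hterm]
    rw [Finset.sum_neg_distrib]
    congr 1
    rw [straightMenage, show n - 1 + 1 = n from by omega]
    refine (Finset.sum_subset (Finset.range_subset_range.2 (by omega : n ≤ 2 * n)) ?_).symm
    intro x hx hnx
    rw [Finset.mem_range] at hx
    rw [Finset.mem_range, not_lt] at hnx
    rw [Nat.choose_eq_zero_of_lt (by omega)]
    simp
  rw [sumA, sumB]
  ring
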